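/- Let x be continuous at τₖ and piecewise C¹ with ẋ(t) = f_{k-1}(t) on (τ_{k-1}, τₖ) and ẋ(t) = f_k(t) on (τₖ, τ_{k+1}), where the event time τₖ(θ) and the state x(θ,t) are C¹ in θ. Then the one-sided θ-derivatives satisfy x'(τₖ⁺) = x'(τₖ⁻) + [f_{k-1}(τₖ⁻) − f_k(τₖ⁺)]·τₖ'. -/

import Mathlib

open Real Set

/-- IPA boundary condition at an event where the state is continuous:
`ξp` and `ξn` are the (C¹ in `(θ,t)`) pre- and post-event pieces of the
state, matching at the event time `τ(θ)`. Then
`x'(τ⁺) = x'(τ⁻) + [f_{k-1}(τ⁻) − f_k(τ⁺)]·τ'`. Here `Lp (1,0) = x'(τ⁻)`,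
`Lp (0,1) = f_{k-1}(τ⁻)`, `Ln (1,0) = x'(τ⁺)`, `Ln (0,1) = f_k(τ⁺)`. -/
theorem stmt10 (ξp ξn : ℝ → ℝ → ℝ) (τ : ℝ → ℝ)
    (θ₀ τ' xL xR fprev fnext : ℝ)
    (Lp Ln : ℝ × ℝ →L[ℝ] ℝ)
    (hp : HasFDerivAt (fun q : ℝ × ℝ => ξp q.1 q.2) Lp (θ₀, τ θ₀))
    (hn : HasFDerivAt (fun q : ℝ × ℝ => ξn q.1 q.2) Ln (θ₀, τ θ₀))
    (hxL : Lp (1, 0) = xL) (hfp : Lp (0, 1) = fprev)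
    (hxR : Ln (1, 0) = xR) (hfn : Ln (0, 1) = fnext)
    (hτ : HasDerivAt τ τ' θ₀)
    (hmatch : ∀ θ, ξp θ (τ θ) = ξn θ (τ θ)) :
    xR = xL + (fprev - fnext) * τ' := by
  have hg : HasDerivAt (fun θ : ℝ => ((θ, τ θ) : ℝ × ℝ)) (1, τ') θ₀ :=
    (hasDerivAt_id θ₀).prodMk hτ
  have hP : HasDerivAt (fun θ => ξp θ (τ θ)) (Lp (1, τ')) θ₀ :=
    hp.comp_hasDerivAt (f := fun θ : ℝ => ((θ, τ θ) : ℝ × ℝ)) θ₀ hg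
  have hN : HasDerivAt (fun θ => ξn θ (τ θ)) (Ln (1, τ')) θ₀ :=
    hn.comp_hasDerivAt (f := fun θ : ℝ => ((θ, τ θ) : ℝ × ℝ)) θ₀ hg
  have heq : (fun θ => ξp θ (τ θ)) = fun θ => ξn θ (τ θ) := funext hmatch
  rw [heq] at hP
  have h := hP.unique hN
  have h1 : ((1 : ℝ), τ') = (1, 0) + τ' • ((0 : ℝ), (1 : ℝ)) := by
    simp [Prod.ext_iff]
  rw [h1, map_add, map_smul, map_add, map_smul, hxL, hfp, hxR, hfn] at h
  simp only [smul_eq_mul] at h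
  linarith
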